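/- Let g be a unimodular Lie algebra with a 2-form Ω taming a complex structure J, let h = span(X) be a 1-dimensional isotropic ideal, and suppose that for every Y in a complement v of span(X, JX) with v ⊆ h^⊥ one has [X,Y] = aᵧX and that the bracket of JX with v preserves the decomposition as in the induction step. Then the quotient Lie algebra h^⊥/h is unimodular. -/

import Mathlib

/-- Under the hypotheses of the induction step (g unimodular, `span X` a 1-dimensional
isotropic ideal, `v` a `J`-invariant complement of `span{X, JX}` inside `h^⊥` with the
stated bracket relations), the quotient Lie algebra `h^⊥/h ≅ v` is unimodular: for every
`Y ∈ v` the trace of the induced endomorphism of `v` given by `ad_Y` vanishes. -/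
theorem quotient_is_unimodular
    {g : Type*} [LieRing g] [LieAlgebra ℝ g] [Module.Finite ℝ g]
    (hunimod : ∀ W : g, LinearMap.trace ℝ g (LieAlgebra.ad ℝ g W : g →ₗ[ℝ] g) = 0)
    (Ω : g →ₗ[ℝ] g →ₗ[ℝ] ℝ) (J : g →ₗ[ℝ] g)
    (halt : ∀ x : g, Ω x x = 0)
    (hJ : ∀ x : g, J (J x) = -x)
    (htame : ∀ x : g, x ≠ 0 → 0 < Ω x (J x))
    (X : g) (hX : X ≠ 0)
    (hideal : ∀ w : g, ∃ t : ℝ, ⁅w, X⁆ = t • X)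
    (v : Submodule ℝ g)
    (hvperp : ∀ Y ∈ v, Ω Y X = 0)
    (hJv : ∀ Y ∈ v, J Y ∈ v)
    (hcompl : IsCompl v (Submodule.span ℝ {X, J X}))
    (hbrackets : ∀ Y ∈ v, ∃ a b : ℝ, ∃ Z₁ ∈ v,
      ⁅X, Y⁆ = a • X ∧ ⁅X, J Y⁆ = b • X ∧
      ⁅J X, Y⁆ = -(2 * b) • X - a • J X + Z₁ ∧
      ⁅J X, J Y⁆ = (2 * a) • X - b • J X + J Z₁) :
    ∀ Y ∈ v, LinearMap.trace ℝ v
      ((Submodule.linearProjOfIsCompl v (Submodule.span ℝ {X, J X}) hcompl) ∘ₗ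
        (LieAlgebra.ad ℝ g Y : g →ₗ[ℝ] g) ∘ₗ v.subtype) = 0 := by
  intro Y hY
  set s : Submodule ℝ g := Submodule.span ℝ {X, J X} with hs
  set π : g →ₗ[ℝ] v := Submodule.linearProjOfIsCompl v s hcompl with hπ
  set π' : g →ₗ[ℝ] s := Submodule.linearProjOfIsCompl s v hcompl.symm with hπ'
  obtain ⟨a, b, Z₁, hZ₁, h1, h2, h3, h4⟩ := hbrackets Y hY
  have hXs : X ∈ s := Submodule.subset_span (Set.mem_insert _ _)
  have hJXs : J X ∈ s := Submodule.subset_span (Set.mem_insert_of_mem _ rfl)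
  -- linear independence of X, J X
  have hΩpos : 0 < Ω X (J X) := htame X hX
  have hli : LinearIndependent ℝ ![X, J X] := by
    rw [LinearIndependent.pair_iff]
    intro c d hcd
    have hΩ : Ω X (c • X + d • J X) = 0 := by rw [hcd]; simp
    rw [map_add, map_smul, map_smul, halt X] at hΩ
    have hd : d = 0 := by
      have : d * Ω X (J X) = 0 := by simpa using hΩ
      rcases mul_eq_zero.1 this with h | h
      · exact h
      · exact absurd h hΩpos.ne'
    subst hd
    have hc : c = 0 := by
      have : c • X = 0 := by simpa using hcd
      rcases smul_eq_zero.1 this with h | h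
      · exact h
      · exact absurd h hX
    exact ⟨hc, rfl⟩
  have hrange : Set.range ![X, J X] = ({X, J X} : Set g) := by
    simp only [Matrix.range_cons, Matrix.range_empty, Set.union_empty, Set.union_singleton]
    exact Set.pair_comm (J X) X
  -- basis of s
  let bs : Module.Basis (Fin 2) ℝ s :=
    (Module.Basis.span hli).map (LinearEquiv.ofEq _ _ (by rw [hrange]))
  have hb0 : (bs 0 : g) = X := by simp [bs, Module.Basis.span_apply]
  have hb1 : (bs 1 : g) = J X := by simp [bs, Module.Basis.span_apply]
  -- the endomorphism of s
  set f' : s →ₗ[ℝ] s := π' ∘ₗ (LieAlgebra.ad ℝ g Y : g →ₗ[ℝ] g) ∘ₗ s.subtype with hf'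
  have hπ'X : π' X = ⟨X, hXs⟩ :=
    Submodule.linearProjOfIsCompl_apply_left hcompl.symm ⟨X, hXs⟩
  have hπ'JX : π' (J X) = ⟨J X, hJXs⟩ :=
    Submodule.linearProjOfIsCompl_apply_left hcompl.symm ⟨J X, hJXs⟩
  have hπ'Z : π' Z₁ = 0 :=
    Submodule.projectionOnto_apply_of_mem_right hcompl.symm hZ₁
  have hfb0 : f' (bs 0) = (-a) • bs 0 := by
    have hYX : ⁅Y, (bs 0 : g)⁆ = (-a) • X := by
      rw [hb0, ← lie_skew, h1, neg_smul]
    have : f' (bs 0) = π' ((-a) • X) := by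
      simp only [hf', LinearMap.comp_apply, Submodule.subtype_apply]
      rw [LieAlgebra.ad_apply, hYX]
    rw [this, map_smul, hπ'X]
    ext
    simp [hb0]
  have hfb1 : f' (bs 1) = (2 * b) • bs 0 + a • bs 1 := by
    have hYJX : ⁅Y, (bs 1 : g)⁆ = (2 * b) • X + a • J X + (-1 : ℝ) • Z₁ := by
      rw [hb1, ← lie_skew, h3]
      module
    have : f' (bs 1) = π' ((2 * b) • X + a • J X + (-1 : ℝ) • Z₁) := by
      simp only [hf', LinearMap.comp_apply, Submodule.subtype_apply]
      rw [LieAlgebra.ad_apply, hYJX]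
    rw [this, map_add, map_add, map_smul, map_smul, map_smul, hπ'X, hπ'JX, hπ'Z]
    ext
    simp [hb0, hb1]
  -- trace of f' is zero
  have htrf' : LinearMap.trace ℝ s f' = 0 := by
    rw [LinearMap.trace_eq_matrix_trace ℝ bs f', Matrix.trace_fin_two]
    have e00 : LinearMap.toMatrix bs bs f' 0 0 = -a := by
      rw [LinearMap.toMatrix_apply, hfb0]
      simp
    have e11 : LinearMap.toMatrix bs bs f' 1 1 = a := by
      rw [LinearMap.toMatrix_apply, hfb1]
      simp [Finsupp.single_apply]
    rw [e00, e11]; ring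
  -- decompose the trace of ad Y over g
  have hdecomp : (LieAlgebra.ad ℝ g Y : g →ₗ[ℝ] g) =
      ((LieAlgebra.ad ℝ g Y : g →ₗ[ℝ] g) ∘ₗ v.subtype) ∘ₗ π +
      ((LieAlgebra.ad ℝ g Y : g →ₗ[ℝ] g) ∘ₗ s.subtype) ∘ₗ π' := by
    ext x
    simp only [LinearMap.add_apply, LinearMap.comp_apply, Submodule.subtype_apply]
    rw [← map_add]
    congr 1
    exact (Submodule.projection_add_projection_eq_self hcompl x).symm
  have htr : LinearMap.trace ℝ g (LieAlgebra.ad ℝ g Y : g →ₗ[ℝ] g) =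
      LinearMap.trace ℝ v (π ∘ₗ (LieAlgebra.ad ℝ g Y : g →ₗ[ℝ] g) ∘ₗ v.subtype) +
      LinearMap.trace ℝ s f' := by
    conv_lhs => rw [hdecomp]
    rw [map_add,
      LinearMap.trace_comp_comm' ((LieAlgebra.ad ℝ g Y : g →ₗ[ℝ] g) ∘ₗ v.subtype) π,
      LinearMap.trace_comp_comm' ((LieAlgebra.ad ℝ g Y : g →ₗ[ℝ] g) ∘ₗ s.subtype) π']
  have := hunimod Y
  rw [htr, htrf', add_zero] at this
  exact this
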